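/- For every integer k ≥ 3, the characteristic polynomials of the adjacency matrices of ℛ_{2k+1} and 𝒬_{2k+1} are both equal to X·(X² − 4(k−2))·(X² − 1)^{k−1}; in particular, ℛ_{2k+1} and 𝒬_{2k+1} are cospectral, with spectrum {±2√(k−2), 0, (±1)^{k−1}}. -/

import Mathlib

open Polynomial
open scoped Classical

/-- The adjacency matrix (over `ℝ`) of a finite simple graph. -/
noncomputable def adjMat {V : Type*} [Fintype V] (G : SimpleGraph V) : Matrix V V ℝ :=
  Matrix.of fun i j => if G.Adj i j then 1 else 0

/-- The bipartite graph with "bipartite adjacency relation" `P`: vertex set `α ⊕ β`, with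
`Sum.inl i` adjacent to `Sum.inr j` iff `P i j` (rows and columns of the bipartite
adjacency matrix). -/
def bipGraph {α β : Type*} (P : α → β → Prop) : SimpleGraph (α ⊕ β) :=
  SimpleGraph.fromRel fun x y => ∃ i j, x = Sum.inl i ∧ y = Sum.inr j ∧ P i j

/-- `ℛ_{2k+1}` (for `k ≥ 3`): the bipartite graph whose `k × (k+1)` bipartite adjacency
matrix is the block matrix `[[I_{k−3}, J], [O, Ĩ₃]]`, where `Ĩ₃ = [I₃ | 1]`. -/
def Rgraph (k : ℕ) : SimpleGraph (Fin k ⊕ Fin (k + 1)) :=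
  bipGraph fun (i : Fin k) (j : Fin (k + 1)) =>
    (i.1 < k - 3 ∧ ((j.1 : ℕ) = i.1 ∨ k - 3 ≤ j.1)) ∨
    (k - 3 ≤ i.1 ∧ ((j.1 : ℕ) = i.1 ∨ j.1 = k))

/-- `𝒬_{2k+1}` (for `k ≥ 3`): the bipartite graph whose `k × (k+1)` bipartite adjacency
matrix is the block matrix `[[Ĩ_{k−3}, J], [O, J₃ − I₃]]`, where `Ĩ_{k−3} = [I_{k−3} | 1]`. -/
def Qgraph (k : ℕ) : SimpleGraph (Fin k ⊕ Fin (k + 1)) :=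
  bipGraph fun (i : Fin k) (j : Fin (k + 1)) =>
    (i.1 < k - 3 ∧ ((j.1 : ℕ) = i.1 ∨ k - 3 ≤ j.1)) ∨
    (k - 3 ≤ i.1 ∧ k - 2 ≤ j.1 ∧ j.1 - (k - 2) ≠ i.1 - (k - 3))

/- ### Auxiliary machinery -/

open Matrix

/-- The 0-1 matrix of a bipartite adjacency relation. -/
noncomputable def bmat {k : ℕ} (P : Fin k → Fin (k+1) → Prop)
    [inst : ∀ i j, Decidable (P i j)] : Matrix (Fin k) (Fin (k+1)) ℝ :=
  Matrix.of fun i j => if P i j then 1 else 0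

lemma adjMat_bipGraph {k : ℕ} (P : Fin k → Fin (k+1) → Prop)
    [inst : ∀ i j, Decidable (P i j)] :
    adjMat (bipGraph P) = Matrix.fromBlocks 0 (bmat P) (bmat P).transpose 0 := by
  ext i j
  rcases i with a | a <;> rcases j with b | b <;>
    simp [adjMat, bipGraph, bmat, SimpleGraph.fromRel_adj, Matrix.fromBlocks] <;>
    by_cases h : P a b <;> simp [h]

lemma my_eval_charpoly {n : Type*} [DecidableEq n] [Fintype n] (M : Matrix n n ℝ) (x : ℝ) :
    (M.charpoly).eval x = (x • (1 : Matrix n n ℝ) - M).det := by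
  rw [Matrix.charpoly, ← Polynomial.coe_evalRingHom, RingHom.map_det]
  congr 1
  ext i j
  by_cases h : i = j <;>
    simp [h, Matrix.charmatrix_apply, Matrix.one_apply, Matrix.diagonal_apply]

lemma det_step {k : ℕ} (N : Matrix (Fin k) (Fin (k+1)) ℝ) (v : Fin k → ℝ)
    (hN : N * N.transpose = 1 + replicateCol Unit v * replicateRow Unit v)
    (x : ℝ) (hx : x ≠ 0) (hc : x^2 - 1 ≠ 0) :
    (x • (1 : Matrix (Fin k ⊕ Fin (k+1)) (Fin k ⊕ Fin (k+1)) ℝ)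
      - fromBlocks 0 N N.transpose 0).det
      = x ^ (2*k+1) * ((1 - x⁻¹*x⁻¹)) ^ k *
        (1 + v ⬝ᵥ ((-(x⁻¹*x⁻¹) / (1 - x⁻¹*x⁻¹)) • v)) := by
  have hxx : x * x⁻¹ = 1 := mul_inv_cancel₀ hx
  have hcc : (1 : ℝ) - x⁻¹*x⁻¹ ≠ 0 := by
    intro h
    apply hc
    have : x⁻¹ * x⁻¹ = 1 := by linarith
    have h2 : (x*x⁻¹) * (x*x⁻¹) = x^2 * (x⁻¹*x⁻¹) := by ring
    rw [hxx, this, one_mul, mul_one] at h2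
    linarith
  have key : (1 - x⁻¹*x⁻¹) * (-(x⁻¹*x⁻¹) / (1 - x⁻¹*x⁻¹)) = -(x⁻¹*x⁻¹) :=
    mul_div_cancel₀ _ hcc
  have e1 : x • -(x⁻¹ • N) = -N := by
    rw [smul_neg, smul_smul, mul_inv_cancel₀ hx, one_smul]
  have e2 : x • -(x⁻¹ • N.transpose) = -N.transpose := by
    rw [smul_neg, smul_smul, mul_inv_cancel₀ hx, one_smul]
  have h1 : x • (1 : Matrix (Fin k ⊕ Fin (k+1)) (Fin k ⊕ Fin (k+1)) ℝ)
      - fromBlocks 0 N N.transpose 0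
      = x • fromBlocks 1 (-(x⁻¹ • N)) (-(x⁻¹ • N.transpose)) 1 := by
    rw [fromBlocks_smul, e1, e2, ← fromBlocks_one, fromBlocks_smul, sub_eq_add_neg,
      fromBlocks_neg, fromBlocks_add]
    congr 1 <;> simp
  have h2 : (1 : Matrix (Fin k) (Fin k) ℝ) - -(x⁻¹ • N) * -(x⁻¹ • N.transpose)
      = (1 - x⁻¹*x⁻¹) • (1 + replicateCol Unit ((-(x⁻¹*x⁻¹) / (1 - x⁻¹*x⁻¹)) • v) * replicateRow Unit v) := by
    have e3 : -(x⁻¹ • N) * -(x⁻¹ • N.transpose) = (x⁻¹ * x⁻¹) • (N * N.transpose) := by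
      rw [Matrix.neg_mul, Matrix.mul_neg, neg_neg, Matrix.smul_mul, Matrix.mul_smul, smul_smul]
    rw [e3, hN]
    ext i j
    simp only [Matrix.sub_apply, Matrix.add_apply, Matrix.smul_apply, Matrix.one_apply,
      Matrix.mul_apply, Finset.univ_unique, Finset.sum_singleton, Matrix.replicateCol_apply,
      Matrix.replicateRow_apply, Pi.smul_apply, smul_eq_mul]
    split_ifs with h
    · linear_combination (-(v i * v j)) * key
    · linear_combination (-(v i * v j)) * key
  rw [h1, Matrix.det_smul, det_fromBlocks_one₂₂, h2, Matrix.det_smul,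
    Matrix.det_one_add_replicateCol_mul_replicateRow]
  simp only [Fintype.card_sum, Fintype.card_fin]
  rw [show k + (k+1) = 2*k+1 by ring]
  ring

lemma scalar_step (n : ℕ) (x : ℝ) (hx : x ≠ 0) (hc : x^2 - 1 ≠ 0) :
    x ^ (2*(n+3)+1) * (1 - x⁻¹*x⁻¹)^(n+3) *
      (1 + (-(x⁻¹*x⁻¹)/(1 - x⁻¹*x⁻¹)) * (4*((n:ℝ)+3) - 9))
    = x * (x^2 - 4*(((n:ℝ)+3)-2)) * (x^2-1)^(n+2) := by
  have hx2 : (x:ℝ)^2 ≠ 0 := pow_ne_zero _ hx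
  have hq : (1:ℝ) - x⁻¹*x⁻¹ = (x^2-1)/x^2 := by field_simp
  have h3 : (-(x⁻¹*x⁻¹))/(1 - x⁻¹*x⁻¹) = -1/(x^2-1) := by
    rw [hq, div_div_eq_mul_div, div_eq_div_iff (by positivity) hc]
    field_simp
  have e1 : ((x^2-1)/x^2 : ℝ)^(n+3) = (x^2-1)^(n+3)/(x^2)^(n+3) := div_pow _ _ _
  have e2 : ((x:ℝ)^2)^(n+3) = x^(2*(n+3)) := (pow_mul x 2 (n+3)).symm
  have e3 : (x:ℝ)^(2*(n+3)+1) = x^(2*(n+3)) * x := pow_succ x _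
  have e4 : ((x:ℝ)^2-1)^(n+3) = (x^2-1)^(n+2) * (x^2-1) := pow_succ _ _
  rw [h3, hq, e1, e2, e3, e4]
  have hBne : (x:ℝ)^(2*(n+3)) ≠ 0 := pow_ne_zero _ hx
  generalize (x:ℝ)^(2*(n+3)) = B at hBne ⊢
  generalize ((x:ℝ)^2-1)^(n+2) = A
  field_simp
  ring

lemma charpoly_eq {k : ℕ} (hk : 3 ≤ k) (N : Matrix (Fin k) (Fin (k+1)) ℝ) (v : Fin k → ℝ)
    (hN : N * N.transpose = 1 + replicateCol Unit v * replicateRow Unit v)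
    (hv : v ⬝ᵥ v = 4*(k:ℝ) - 9) :
    (fromBlocks 0 N N.transpose 0).charpoly
      = X * (X ^ 2 - C (4 * ((k : ℝ) - 2))) * (X ^ 2 - 1) ^ (k - 1) := by
  obtain ⟨n, rfl⟩ : ∃ n, k = n + 3 := ⟨k - 3, by omega⟩
  apply Polynomial.eq_of_infinite_eval_eq
  apply Set.Infinite.mono (s := Set.Ioi (1:ℝ))
  · intro x hx
    have hx1 : (1:ℝ) < x := hx
    have hx0 : x ≠ 0 := by linarith
    have hc : x^2 - 1 ≠ 0 := by nlinarith
    simp only [Set.mem_setOf_eq]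
    rw [my_eval_charpoly, det_step N v hN x hx0 hc]
    have hdot : v ⬝ᵥ ((-(x⁻¹*x⁻¹) / (1 - x⁻¹*x⁻¹)) • v)
        = (-(x⁻¹*x⁻¹) / (1 - x⁻¹*x⁻¹)) * (4*((n:ℕ)+3:ℝ) - 9) := by
      rw [dotProduct_smul, smul_eq_mul]
      rw [hv]; push_cast; ring
    rw [hdot]
    have := scalar_step n x hx0 hc
    simp only [eval_mul, eval_pow, eval_sub, eval_one, eval_X, eval_C]
    push_cast
    exact this
  · exact Set.Ioi_infinite 1

set_option maxHeartbeats 1000000 in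
lemma sumR (n a b : ℕ) (ha : a < n + 3) (hb : b < n + 3) :
    ∑ j ∈ Finset.range (n+3+1),
      ((if (a < n+3-3 ∧ (j = a ∨ n+3-3 ≤ j)) ∨ (n+3-3 ≤ a ∧ (j = a ∨ j = n+3)) then (1:ℝ) else 0) *
       (if (b < n+3-3 ∧ (j = b ∨ n+3-3 ≤ j)) ∨ (n+3-3 ≤ b ∧ (j = b ∨ j = n+3)) then (1:ℝ) else 0))
    = (if a = b then 1 else 0) + (if a < n then 2 else 1) * (if b < n then 2 else 1) := by
  rw [show n+3+1 = n+1+1+1+1 from rfl]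
  rw [Finset.sum_range_succ, Finset.sum_range_succ, Finset.sum_range_succ, Finset.sum_range_succ]
  have hcongr : ∀ j ∈ Finset.range n,
      ((if (a < n+3-3 ∧ (j = a ∨ n+3-3 ≤ j)) ∨ (n+3-3 ≤ a ∧ (j = a ∨ j = n+3)) then (1:ℝ) else 0) *
       (if (b < n+3-3 ∧ (j = b ∨ n+3-3 ≤ j)) ∨ (n+3-3 ≤ b ∧ (j = b ∨ j = n+3)) then (1:ℝ) else 0))
      = (if j = a then (if j = b then (1:ℝ) else 0) else 0) := by
    intro j hj
    rw [Finset.mem_range] at hj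
    have h1 : ((a < n+3-3 ∧ (j = a ∨ n+3-3 ≤ j)) ∨ (n+3-3 ≤ a ∧ (j = a ∨ j = n+3))) ↔ j = a := by
      omega
    have h2 : ((b < n+3-3 ∧ (j = b ∨ n+3-3 ≤ j)) ∨ (n+3-3 ≤ b ∧ (j = b ∨ j = n+3))) ↔ j = b := by
      omega
    rw [if_congr h1 rfl rfl, if_congr h2 rfl rfl, ite_mul, one_mul, zero_mul]
  rw [Finset.sum_congr rfl hcongr, Finset.sum_ite_eq' (Finset.range n) a
    (fun j => if j = b then (1:ℝ) else 0)]
  have f0 : ∀ c, c < n + 3 →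
      (((c < n+3-3 ∧ ((n:ℕ) = c ∨ n+3-3 ≤ n)) ∨ (n+3-3 ≤ c ∧ ((n:ℕ) = c ∨ (n:ℕ) = n+3)))
        ↔ c ≤ n) := by intro c hc; omega
  have f1 : ∀ c, c < n + 3 →
      (((c < n+3-3 ∧ (n+1 = c ∨ n+3-3 ≤ n+1)) ∨ (n+3-3 ≤ c ∧ (n+1 = c ∨ n+1 = n+3)))
        ↔ (c < n ∨ c = n+1)) := by intro c hc; omega
  have f2 : ∀ c, c < n + 3 →
      (((c < n+3-3 ∧ (n+1+1 = c ∨ n+3-3 ≤ n+1+1)) ∨ (n+3-3 ≤ c ∧ (n+1+1 = c ∨ n+1+1 = n+3)))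
        ↔ (c < n ∨ c = n+2)) := by intro c hc; omega
  have f3 : ∀ c, c < n + 3 →
      (((c < n+3-3 ∧ (n+1+1+1 = c ∨ n+3-3 ≤ n+1+1+1)) ∨ (n+3-3 ≤ c ∧ (n+1+1+1 = c ∨ n+1+1+1 = n+3)))
        ↔ (0 = 0)) := by intro c hc; omega
  rw [if_congr (f0 a ha) rfl rfl, if_congr (f0 b hb) rfl rfl,
    if_congr (f1 a ha) rfl rfl, if_congr (f1 b hb) rfl rfl,
    if_congr (f2 a ha) rfl rfl, if_congr (f2 b hb) rfl rfl,
    if_congr (f3 a ha) rfl rfl, if_congr (f3 b hb) rfl rfl,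
    if_pos rfl]
  simp only [Finset.mem_range]
  split_ifs <;> first | (exfalso; omega) | norm_num

set_option maxHeartbeats 1000000 in
lemma sumQ (n a b : ℕ) (ha : a < n + 3) (hb : b < n + 3) :
    ∑ j ∈ Finset.range (n+3+1),
      ((if (a < n+3-3 ∧ (j = a ∨ n+3-3 ≤ j)) ∨ (n+3-3 ≤ a ∧ n+3-2 ≤ j ∧ j - (n+3-2) ≠ a - (n+3-3)) then (1:ℝ) else 0) *
       (if (b < n+3-3 ∧ (j = b ∨ n+3-3 ≤ j)) ∨ (n+3-3 ≤ b ∧ n+3-2 ≤ j ∧ j - (n+3-2) ≠ b - (n+3-3)) then (1:ℝ) else 0))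
    = (if a = b then 1 else 0) + (if a < n then 2 else 1) * (if b < n then 2 else 1) := by
  rw [show n+3+1 = n+1+1+1+1 from rfl]
  rw [Finset.sum_range_succ, Finset.sum_range_succ, Finset.sum_range_succ, Finset.sum_range_succ]
  have hcongr : ∀ j ∈ Finset.range n,
      ((if (a < n+3-3 ∧ (j = a ∨ n+3-3 ≤ j)) ∨ (n+3-3 ≤ a ∧ n+3-2 ≤ j ∧ j - (n+3-2) ≠ a - (n+3-3)) then (1:ℝ) else 0) *
       (if (b < n+3-3 ∧ (j = b ∨ n+3-3 ≤ j)) ∨ (n+3-3 ≤ b ∧ n+3-2 ≤ j ∧ j - (n+3-2) ≠ b - (n+3-3)) then (1:ℝ) else 0))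
      = (if j = a then (if j = b then (1:ℝ) else 0) else 0) := by
    intro j hj
    rw [Finset.mem_range] at hj
    have h1 : ((a < n+3-3 ∧ (j = a ∨ n+3-3 ≤ j)) ∨ (n+3-3 ≤ a ∧ n+3-2 ≤ j ∧ j - (n+3-2) ≠ a - (n+3-3))) ↔ j = a := by
      omega
    have h2 : ((b < n+3-3 ∧ (j = b ∨ n+3-3 ≤ j)) ∨ (n+3-3 ≤ b ∧ n+3-2 ≤ j ∧ j - (n+3-2) ≠ b - (n+3-3))) ↔ j = b := by
      omega
    rw [if_congr h1 rfl rfl, if_congr h2 rfl rfl, ite_mul, one_mul, zero_mul]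
  rw [Finset.sum_congr rfl hcongr, Finset.sum_ite_eq' (Finset.range n) a
    (fun j => if j = b then (1:ℝ) else 0)]
  have f0 : ∀ c, c < n + 3 →
      (((c < n+3-3 ∧ ((n:ℕ) = c ∨ n+3-3 ≤ n)) ∨ (n+3-3 ≤ c ∧ n+3-2 ≤ n ∧ n - (n+3-2) ≠ c - (n+3-3)))
        ↔ c < n) := by intro c hc; omega
  have f1 : ∀ c, c < n + 3 →
      (((c < n+3-3 ∧ (n+1 = c ∨ n+3-3 ≤ n+1)) ∨ (n+3-3 ≤ c ∧ n+3-2 ≤ n+1 ∧ n+1 - (n+3-2) ≠ c - (n+3-3)))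
        ↔ ¬(c = n)) := by intro c hc; omega
  have f2 : ∀ c, c < n + 3 →
      (((c < n+3-3 ∧ (n+1+1 = c ∨ n+3-3 ≤ n+1+1)) ∨ (n+3-3 ≤ c ∧ n+3-2 ≤ n+1+1 ∧ n+1+1 - (n+3-2) ≠ c - (n+3-3)))
        ↔ ¬(c = n+1)) := by intro c hc; omega
  have f3 : ∀ c, c < n + 3 →
      (((c < n+3-3 ∧ (n+1+1+1 = c ∨ n+3-3 ≤ n+1+1+1)) ∨ (n+3-3 ≤ c ∧ n+3-2 ≤ n+1+1+1 ∧ n+1+1+1 - (n+3-2) ≠ c - (n+3-3)))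
        ↔ ¬(c = n+2)) := by intro c hc; omega
  rw [if_congr (f0 a ha) rfl rfl, if_congr (f0 b hb) rfl rfl,
    if_congr (f1 a ha) rfl rfl, if_congr (f1 b hb) rfl rfl,
    if_congr (f2 a ha) rfl rfl, if_congr (f2 b hb) rfl rfl,
    if_congr (f3 a ha) rfl rfl, if_congr (f3 b hb) rfl rfl]
  simp only [Finset.mem_range]
  split_ifs <;> first | (exfalso; omega) | norm_num

/-- The common "Perron" vector. -/
noncomputable def vv (n : ℕ) : Fin (n+3) → ℝ := fun i => if i.1 < n then 2 else 1

lemma vv_dot (n : ℕ) : vv n ⬝ᵥ vv n = 4*((n+3 : ℕ):ℝ) - 9 := by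
  unfold dotProduct vv
  rw [Fin.sum_univ_eq_sum_range
    (fun m => (if m < n then (2:ℝ) else 1) * (if m < n then (2:ℝ) else 1)) (n+3)]
  rw [show n+3 = n+1+1+1 from rfl]
  rw [Finset.sum_range_succ, Finset.sum_range_succ, Finset.sum_range_succ]
  have hcongr : ∀ j ∈ Finset.range n,
      (if j < n then (2:ℝ) else 1) * (if j < n then (2:ℝ) else 1) = 4 := by
    intro j hj
    rw [Finset.mem_range] at hj
    rw [if_pos hj]
    norm_num
  rw [Finset.sum_congr rfl hcongr, Finset.sum_const, Finset.card_range,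
    if_neg (by omega : ¬ n < n), if_neg (by omega : ¬ n+1 < n), if_neg (by omega : ¬ n+1+1 < n)]
  push_cast
  ring

lemma matR (n : ℕ) :
    (bmat (fun (i : Fin (n+3)) (j : Fin (n+3+1)) =>
      (i.1 < n+3-3 ∧ ((j.1 : ℕ) = i.1 ∨ n+3-3 ≤ j.1)) ∨ (n+3-3 ≤ i.1 ∧ ((j.1 : ℕ) = i.1 ∨ j.1 = n+3)))) *
    (bmat (fun (i : Fin (n+3)) (j : Fin (n+3+1)) =>
      (i.1 < n+3-3 ∧ ((j.1 : ℕ) = i.1 ∨ n+3-3 ≤ j.1)) ∨ (n+3-3 ≤ i.1 ∧ ((j.1 : ℕ) = i.1 ∨ j.1 = n+3)))).transpose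
    = 1 + replicateCol Unit (vv n) * replicateRow Unit (vv n) := by
  ext i i'
  rw [Matrix.mul_apply]
  simp only [bmat, Matrix.transpose_apply, Matrix.of_apply, Matrix.add_apply, Matrix.one_apply,
    Matrix.mul_apply, Matrix.replicateCol_apply, Matrix.replicateRow_apply, Finset.univ_unique,
    Finset.sum_singleton, vv]
  rw [Fin.sum_univ_eq_sum_range (fun j =>
      ((if ((i : Fin (n+3)).1 < n+3-3 ∧ (j = i.1 ∨ n+3-3 ≤ j)) ∨ (n+3-3 ≤ i.1 ∧ (j = i.1 ∨ j = n+3)) then (1:ℝ) else 0) *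
       (if ((i' : Fin (n+3)).1 < n+3-3 ∧ (j = i'.1 ∨ n+3-3 ≤ j)) ∨ (n+3-3 ≤ i'.1 ∧ (j = i'.1 ∨ j = n+3)) then (1:ℝ) else 0))) (n+3+1)]
  rw [sumR n i.1 i'.1 i.isLt i'.isLt]
  rw [if_congr (Fin.ext_iff (a := i) (b := i')).symm rfl rfl]

lemma matQ (n : ℕ) :
    (bmat (fun (i : Fin (n+3)) (j : Fin (n+3+1)) =>
      (i.1 < n+3-3 ∧ ((j.1 : ℕ) = i.1 ∨ n+3-3 ≤ j.1)) ∨ (n+3-3 ≤ i.1 ∧ n+3-2 ≤ j.1 ∧ j.1 - (n+3-2) ≠ i.1 - (n+3-3)))) *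
    (bmat (fun (i : Fin (n+3)) (j : Fin (n+3+1)) =>
      (i.1 < n+3-3 ∧ ((j.1 : ℕ) = i.1 ∨ n+3-3 ≤ j.1)) ∨ (n+3-3 ≤ i.1 ∧ n+3-2 ≤ j.1 ∧ j.1 - (n+3-2) ≠ i.1 - (n+3-3)))).transpose
    = 1 + replicateCol Unit (vv n) * replicateRow Unit (vv n) := by
  ext i i'
  rw [Matrix.mul_apply]
  simp only [bmat, Matrix.transpose_apply, Matrix.of_apply, Matrix.add_apply, Matrix.one_apply,
    Matrix.mul_apply, Matrix.replicateCol_apply, Matrix.replicateRow_apply, Finset.univ_unique,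
    Finset.sum_singleton, vv]
  rw [Fin.sum_univ_eq_sum_range (fun j =>
      ((if ((i : Fin (n+3)).1 < n+3-3 ∧ (j = i.1 ∨ n+3-3 ≤ j)) ∨ (n+3-3 ≤ i.1 ∧ n+3-2 ≤ j ∧ j - (n+3-2) ≠ i.1 - (n+3-3)) then (1:ℝ) else 0) *
       (if ((i' : Fin (n+3)).1 < n+3-3 ∧ (j = i'.1 ∨ n+3-3 ≤ j)) ∨ (n+3-3 ≤ i'.1 ∧ n+3-2 ≤ j ∧ j - (n+3-2) ≠ i'.1 - (n+3-3)) then (1:ℝ) else 0))) (n+3+1)]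
  rw [sumQ n i.1 i'.1 i.isLt i'.isLt]
  rw [if_congr (Fin.ext_iff (a := i) (b := i')).symm rfl rfl]

/-- For `k ≥ 3`, the characteristic polynomials of the adjacency matrices of `ℛ_{2k+1}` and
`𝒬_{2k+1}` are both equal to `X (X² − 4(k−2)) (X² − 1)^{k−1}`; in particular the two graphs
are cospectral. -/
theorem charpoly_Rgraph_Qgraph (k : ℕ) (hk : 3 ≤ k) :
    (adjMat (Rgraph k)).charpoly =
        X * (X ^ 2 - C (4 * ((k : ℝ) - 2))) * (X ^ 2 - 1) ^ (k - 1) ∧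
      (adjMat (Qgraph k)).charpoly =
        X * (X ^ 2 - C (4 * ((k : ℝ) - 2))) * (X ^ 2 - 1) ^ (k - 1) := by
  obtain ⟨n, rfl⟩ : ∃ n, k = n + 3 := ⟨k - 3, by omega⟩
  constructor
  · have e : adjMat (Rgraph (n+3)) = Matrix.fromBlocks 0
        (bmat (fun (i : Fin (n+3)) (j : Fin (n+3+1)) =>
          (i.1 < n+3-3 ∧ ((j.1 : ℕ) = i.1 ∨ n+3-3 ≤ j.1)) ∨ (n+3-3 ≤ i.1 ∧ ((j.1 : ℕ) = i.1 ∨ j.1 = n+3))))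
        (bmat (fun (i : Fin (n+3)) (j : Fin (n+3+1)) =>
          (i.1 < n+3-3 ∧ ((j.1 : ℕ) = i.1 ∨ n+3-3 ≤ j.1)) ∨ (n+3-3 ≤ i.1 ∧ ((j.1 : ℕ) = i.1 ∨ j.1 = n+3)))).transpose
        0 := adjMat_bipGraph _
    rw [e, charpoly_eq (by omega) _ (vv n) (matR n) (vv_dot n)]
  · have e : adjMat (Qgraph (n+3)) = Matrix.fromBlocks 0
        (bmat (fun (i : Fin (n+3)) (j : Fin (n+3+1)) =>
          (i.1 < n+3-3 ∧ ((j.1 : ℕ) = i.1 ∨ n+3-3 ≤ j.1)) ∨ (n+3-3 ≤ i.1 ∧ n+3-2 ≤ j.1 ∧ j.1 - (n+3-2) ≠ i.1 - (n+3-3))))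
        (bmat (fun (i : Fin (n+3)) (j : Fin (n+3+1)) =>
          (i.1 < n+3-3 ∧ ((j.1 : ℕ) = i.1 ∨ n+3-3 ≤ j.1)) ∨ (n+3-3 ≤ i.1 ∧ n+3-2 ≤ j.1 ∧ j.1 - (n+3-2) ≠ i.1 - (n+3-3)))).transpose
        0 := adjMat_bipGraph _
    rw [e, charpoly_eq (by omega) _ (vv n) (matQ n) (vv_dot n)]
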